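/- Let K be a number field of degree D. The set of preperiodic points of f(x) = x² - 2 in K is finite, with cardinality at most ∑_{n=1}^{8D²} φ(n). -/

import Mathlib

open Polynomial

lemma odd_le_sq_totient (n : ℕ) (hn : n ≠ 0) (hodd : ¬ 2 ∣ n) : n ≤ n.totient ^ 2 := by
  conv_lhs => rw [← Nat.factorization_prod_pow_eq_self hn]
  rw [Nat.totient_eq_prod_factorization hn, Finsupp.prod, Finsupp.prod, ← Finset.prod_pow]
  apply Finset.prod_le_prod'
  intro p hp
  have hp' : p ∈ n.primeFactors := by rwa [← Nat.support_factorization]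
  have hpp : p.Prime := Nat.prime_of_mem_primeFactors hp'
  have hk : n.factorization p ≠ 0 := Finsupp.mem_support_iff.mp hp
  have hp3 : 3 ≤ p := by
    rcases hpp.two_le.lt_or_eq with h | h
    · omega
    · exact absurd (h ▸ Nat.dvd_of_mem_primeFactors hp') hodd
  set k := n.factorization p with hkdef
  obtain ⟨q, hq⟩ : ∃ q, p = q + 1 := ⟨p - 1, by omega⟩
  have h1 : p ≤ (p - 1)^2 := by subst hq; simp only [Nat.add_sub_cancel]; nlinarith
  calc p ^ k ≤ p ^ (2*(k-1)) * p := by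
        rw [← pow_succ]; exact Nat.pow_le_pow_right hpp.pos (by omega)
    _ ≤ p ^ (2*(k-1)) * (p-1)^2 := Nat.mul_le_mul_left _ h1
    _ = (p ^ (k - 1) * (p - 1)) ^ 2 := by rw [mul_comm 2]; ring

lemma le_two_mul_sq_totient (n : ℕ) : n ≤ 2 * n.totient ^ 2 := by
  rcases Nat.eq_zero_or_pos n with rfl | hn
  · simp
  have hne : n ≠ 0 := hn.ne'
  obtain ⟨a, m, hcop2, hmodd, hsplit⟩ :
      ∃ a m, Nat.Coprime 2 m ∧ ¬ 2 ∣ m ∧ 2 ^ a * m = n :=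
    ⟨n.factorization 2, n / 2 ^ n.factorization 2,
      Nat.coprime_ordCompl Nat.prime_two hne,
      Nat.not_dvd_ordCompl Nat.prime_two hne,
      Nat.ordProj_mul_ordCompl_eq_self n 2⟩
  have hmne : m ≠ 0 := by
    intro h; rw [h, mul_zero] at hsplit; exact hne hsplit.symm
  have hcop : Nat.Coprime (2 ^ a) m := hcop2.pow_left a
  have htot : n.totient = (2^a).totient * m.totient := by
    rw [← hsplit, Nat.totient_mul hcop]
  have hmle : m ≤ m.totient ^ 2 := odd_le_sq_totient m hmne hmodd
  rcases Nat.eq_zero_or_pos a with rfl | hapos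
  · simp only [pow_zero, one_mul] at hsplit htot
    subst hsplit
    nlinarith [hmle]
  · have h2a : 2 ^ a ≤ 2 * ((2^a).totient)^2 := by
      rw [Nat.totient_prime_pow Nat.prime_two hapos]
      have : 2 ^ a ≤ 2 * (2 ^ (a-1))^2 := by
        rw [← pow_mul, ← pow_succ']
        exact Nat.pow_le_pow_right (by norm_num) (by omega)
      simpa using this
    calc n = 2 ^ a * m := hsplit.symm
      _ ≤ (2 * ((2^a).totient)^2) * (m.totient ^ 2) := Nat.mul_le_mul h2a hmle
      _ = 2 * n.totient ^ 2 := by rw [htot]; ring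

lemma iter_sq_sub_two {F : Type*} [Field F] (ζ : F) (hζ : ζ ≠ 0) (k : ℕ) :
    (fun y : F => y ^ 2 - 2)^[k] (ζ + ζ⁻¹) = ζ ^ (2 ^ k) + (ζ ^ (2 ^ k))⁻¹ := by
  induction k with
  | zero => simp
  | succ k ih =>
      rw [Function.iterate_succ_apply', ih]
      have hz : ζ ^ (2 ^ k) ≠ 0 := pow_ne_zero _ hζ
      have hz2 : ζ ^ (2 ^ (k+1)) ≠ 0 := pow_ne_zero _ hζ
      rw [pow_succ 2 k, pow_mul]
      field_simp
      ring

lemma ringHom_iter_sq_sub_two {R S : Type*} [CommRing R] [CommRing S] (φ : R →+* S)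
    (x : R) (k : ℕ) :
    φ ((fun y : R => y ^ 2 - 2)^[k] x) = (fun y : S => y ^ 2 - 2)^[k] (φ x) := by
  induction k with
  | zero => simp
  | succ k ih =>
      rw [Function.iterate_succ_apply', Function.iterate_succ_apply', ← ih]
      simp [map_sub, map_pow, map_ofNat]

lemma add_inv_inj_aux {F : Type*} [Field F] {u v : F} (hu : u ≠ 0) (hv : v ≠ 0)
    (h : u + u⁻¹ = v + v⁻¹) : u = v ∨ u * v = 1 := by
  have h' : (u + u⁻¹) * (u * v) = (v + v⁻¹) * (u * v) := by rw [h]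
  have huv : u * v ≠ 0 := mul_ne_zero hu hv
  have key2 : (u - v) * (u * v - 1) * (u * v) = 0 := by
    field_simp at h'
    linear_combination (u * v) * h'
  have key : (u - v) * (u * v - 1) = 0 := by
    rcases mul_eq_zero.mp key2 with h1 | h1
    · exact h1
    · exact absurd h1 huv
  rcases mul_eq_zero.mp key with h1 | h1
  · exact Or.inl (sub_eq_zero.mp h1)
  · exact Or.inr (by linear_combination h1)

lemma exists_root_of_unity (K : Type*) [Field K] [NumberField K] (x : K)
    (hx : (Set.range fun k : ℕ => (fun y : K => y ^ 2 - 2)^[k] x).Finite) :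
    ∃ ζ : AlgebraicClosure K, 1 ≤ orderOf ζ ∧
      orderOf ζ ≤ 8 * Module.finrank ℚ K ^ 2 ∧
      algebraMap K (AlgebraicClosure K) x = ζ + ζ⁻¹ := by
  set Ω := AlgebraicClosure K
  haveI : CharZero Ω := charZero_of_injective_algebraMap (algebraMap K Ω).injective
  set xΩ : Ω := algebraMap K Ω x with hxΩ
  -- the quadratic over K
  set q : K[X] := X ^ 2 + (C (-x) * X + C 1) with hq
  have hqlow : (C (-x) * X + C 1).degree < 2 := lt_of_le_of_lt (degree_linear_le) (by norm_num)
  have hqdeg : q.degree = 2 := by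
    rw [hq, degree_add_eq_left_of_degree_lt (by simpa using hqlow)]
    simpa using degree_X_pow 2
  have hqmonic : q.Monic := monic_X_pow_add (by simpa using hqlow)
  have hqnd : q.natDegree = 2 := natDegree_eq_of_degree_eq_some hqdeg
  -- a root ζ of q in Ω
  have hpq : (q.map (algebraMap K Ω)).degree = 2 := by
    rwa [degree_map]
  obtain ⟨ζ, hζroot⟩ := IsAlgClosed.exists_root (q.map (algebraMap K Ω))
    (by rw [hpq]; norm_num)
  have haev : (aeval ζ) q = 0 := by rwa [aeval_def, ← eval_map]
  have hev : ζ ^ 2 - xΩ * ζ + 1 = 0 := by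
    have := haev
    simp only [hq, map_add, map_mul, map_pow, aeval_X, aeval_C, map_neg, map_one] at this
    linear_combination this
  have hζ0 : ζ ≠ 0 := by
    intro h
    rw [h] at hev
    simp at hev
  have hxζ : xΩ = ζ + ζ⁻¹ := by
    have hinv := mul_inv_cancel₀ hζ0
    linear_combination (-ζ⁻¹) * hev + (ζ - xΩ) * hinv
  -- ζ has finite order
  obtain ⟨m, n, hmn, he⟩ :
      ∃ m n : ℕ, m ≠ n ∧ (fun y : K => y ^ 2 - 2)^[m] x = (fun y : K => y ^ 2 - 2)^[n] x := by
    haveI := hx.to_subtype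
    obtain ⟨m, n, hmn, he⟩ := Finite.exists_ne_map_eq_of_infinite
      (fun k : ℕ => (⟨(fun y : K => y ^ 2 - 2)^[k] x, ⟨k, rfl⟩⟩ :
        (Set.range fun k : ℕ => (fun y : K => y ^ 2 - 2)^[k] x)))
    exact ⟨m, n, hmn, by simpa [Subtype.ext_iff] using he⟩
  have heΩ : ζ ^ (2 ^ m) + (ζ ^ (2 ^ m))⁻¹ = ζ ^ (2 ^ n) + (ζ ^ (2 ^ n))⁻¹ := by
    have h1 := congrArg (algebraMap K Ω) he
    rw [ringHom_iter_sq_sub_two, ringHom_iter_sq_sub_two, ← hxΩ, hxζ,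
      iter_sq_sub_two ζ hζ0, iter_sq_sub_two ζ hζ0] at h1
    exact h1
  have hpowcancel : ∀ a b : ℕ, a < b → ζ ^ (2 ^ a) = ζ ^ (2 ^ b) → IsOfFinOrder ζ := by
    intro a b hab hpow
    have hlt : 2 ^ a < 2 ^ b := Nat.pow_lt_pow_right (by norm_num) hab
    refine isOfFinOrder_iff_pow_eq_one.mpr ⟨2 ^ b - 2 ^ a, by omega, ?_⟩
    have h2 : ζ ^ (2 ^ b - 2 ^ a) * ζ ^ (2 ^ a) = 1 * ζ ^ (2 ^ a) := by
      rw [← pow_add, one_mul, hpow]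
      congr 1
      omega
    exact mul_right_cancel₀ (pow_ne_zero _ hζ0) h2
  have hfin : IsOfFinOrder ζ := by
    rcases add_inv_inj_aux (pow_ne_zero _ hζ0) (pow_ne_zero _ hζ0) heΩ with h1 | h1
    · rcases Nat.lt_or_gt_of_ne hmn with hlt | hlt
      · exact hpowcancel m n hlt h1
      · exact hpowcancel n m hlt h1.symm
    · exact isOfFinOrder_iff_pow_eq_one.mpr ⟨2 ^ m + 2 ^ n, by positivity,
        by rw [pow_add]; exact h1⟩
  have hord : 0 < orderOf ζ := hfin.orderOf_pos
  have hprim : IsPrimitiveRoot ζ (orderOf ζ) := IsPrimitiveRoot.orderOf ζ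
  -- degree bound
  have hint : IsIntegral K ζ := ⟨q, hqmonic, by rwa [aeval_def] at haev⟩
  have hdK : (minpoly K ζ).natDegree ≤ 2 := by
    have hd := minpoly.degree_le_of_ne_zero K ζ (hqmonic.ne_zero) haev
    have := natDegree_le_natDegree hd
    omega
  set F := IntermediateField.adjoin K {ζ} with hF
  haveI : FiniteDimensional K F := IntermediateField.adjoin.finiteDimensional hint
  haveI : CharZero F := charZero_of_injective_algebraMap (algebraMap K F).injective
  haveI : IsScalarTower ℚ K F := IsScalarTower.of_algebraMap_eq' (Subsingleton.elim _ _)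
  haveI : IsScalarTower ℚ F Ω := IsScalarTower.of_algebraMap_eq' (Subsingleton.elim _ _)
  haveI : FiniteDimensional ℚ F := FiniteDimensional.trans ℚ K F
  have hζmem : ζ ∈ F := IntermediateField.mem_adjoin_simple_self K ζ
  set ζ' : F := ⟨ζ, hζmem⟩ with hζ'
  have hmap : algebraMap F Ω ζ' = ζ := rfl
  have hminpoly : minpoly ℚ ζ = minpoly ℚ ζ' := by
    rw [← hmap]
    exact minpoly.algebraMap_eq (algebraMap F Ω).injective ζ'
  have htot : Nat.totient (orderOf ζ) = (minpoly ℚ ζ).natDegree := by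
    rw [← Polynomial.cyclotomic_eq_minpoly_rat hprim hord, natDegree_cyclotomic]
  have hrank : Module.finrank K F = (minpoly K ζ).natDegree :=
    IntermediateField.adjoin.finrank hint
  have hφle : Nat.totient (orderOf ζ) ≤ 2 * Module.finrank ℚ K := by
    rw [htot, hminpoly]
    calc (minpoly ℚ ζ').natDegree ≤ Module.finrank ℚ F := minpoly.natDegree_le ζ'
      _ = Module.finrank ℚ K * Module.finrank K F := (Module.finrank_mul_finrank ℚ K F).symm
      _ ≤ Module.finrank ℚ K * 2 := Nat.mul_le_mul_left _ (hrank ▸ hdK)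
      _ = 2 * Module.finrank ℚ K := Nat.mul_comm _ _
  refine ⟨ζ, hord, ?_, hxζ⟩
  calc orderOf ζ ≤ 2 * Nat.totient (orderOf ζ) ^ 2 := le_two_mul_sq_totient _
    _ ≤ 2 * (2 * Module.finrank ℚ K) ^ 2 :=
        Nat.mul_le_mul_left _ (Nat.pow_le_pow_left hφle 2)
    _ = 8 * Module.finrank ℚ K ^ 2 := by ring

theorem preperiodic_finite_card_bound (K : Type*) [Field K] [NumberField K] :
    {x : K | (Set.range fun k : ℕ => (fun y : K => y ^ 2 - 2)^[k] x).Finite}.Finite ∧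
      {x : K | (Set.range fun k : ℕ => (fun y : K => y ^ 2 - 2)^[k] x).Finite}.ncard ≤
        ∑ n ∈ Finset.Icc 1 (8 * Module.finrank ℚ K ^ 2), Nat.totient n := by
  classical
  set Ω := AlgebraicClosure K
  haveI : CharZero Ω := charZero_of_injective_algebraMap (algebraMap K Ω).injective
  set N := 8 * Module.finrank ℚ K ^ 2 with hN
  set T : Finset Ω := (Finset.Icc 1 N).biUnion (fun n => primitiveRoots n Ω) with hT
  set S := {x : K | (Set.range fun k : ℕ => (fun y : K => y ^ 2 - 2)^[k] x).Finite} with hS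
  have hmap : ∀ x ∈ S, ∃ ζ ∈ T, algebraMap K Ω x = ζ + ζ⁻¹ := by
    intro x hx
    obtain ⟨ζ, h1, h2, h3⟩ := exists_root_of_unity K x hx
    refine ⟨ζ, ?_, h3⟩
    refine Finset.mem_biUnion.mpr ⟨orderOf ζ, Finset.mem_Icc.mpr ⟨h1, h2⟩, ?_⟩
    exact (mem_primitiveRoots (by omega)).mpr (IsPrimitiveRoot.orderOf ζ)
  choose g hgT hgx using hmap
  set f : K → Ω := fun x => if h : x ∈ S then g x h else 0 with hf
  have hfT : ∀ x ∈ S, f x ∈ T := by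
    intro x hx; simp only [hf, dif_pos hx]; exact hgT x hx
  have hfx : ∀ x ∈ S, algebraMap K Ω x = f x + (f x)⁻¹ := by
    intro x hx; simp only [hf, dif_pos hx]; exact hgx x hx
  have hinj : Set.InjOn f S := by
    intro a ha b hb hab
    have : algebraMap K Ω a = algebraMap K Ω b := by
      rw [hfx a ha, hfx b hb, hab]
    exact (algebraMap K Ω).injective this
  have hfin : S.Finite := by
    refine Set.Finite.of_finite_image ?_ hinj
    exact Set.Finite.subset T.finite_toSet (by
      rintro _ ⟨x, hx, rfl⟩; exact hfT x hx)
  refine ⟨hfin, ?_⟩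
  have hcard : ∀ n ∈ Finset.Icc 1 N, (primitiveRoots n Ω).card = Nat.totient n := by
    intro n hn
    have hn1 : 1 ≤ n := (Finset.mem_Icc.mp hn).1
    haveI : NeZero (n : Ω) := ⟨Nat.cast_ne_zero.mpr (by omega)⟩
    have hdeg : (cyclotomic n Ω).degree ≠ 0 := by
      rw [degree_cyclotomic]
      exact_mod_cast (Nat.totient_pos.mpr hn1).ne'
    obtain ⟨μ, hμ⟩ := IsAlgClosed.exists_root _ hdeg
    exact (isRoot_cyclotomic_iff.mp hμ).card_primitiveRoots
  calc S.ncard ≤ (↑T : Set Ω).ncard :=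
        Set.ncard_le_ncard_of_injOn f hfT hinj T.finite_toSet
    _ = T.card := Set.ncard_coe_finset T
    _ ≤ ∑ n ∈ Finset.Icc 1 N, (primitiveRoots n Ω).card := Finset.card_biUnion_le
    _ = ∑ n ∈ Finset.Icc 1 N, Nat.totient n := Finset.sum_congr rfl hcard
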